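/- Let Z₁,…,Z_L be positive definite matrices and A a positive semi-definite matrix, and let Φ₁,…,Φ_L be matrices with Σ_l Φ_l = I. Then -tr((Σ_l Z_l)⁻¹ A) ≥ -Σ_l tr(Z_l⁻¹ Φ_l A Φ_lᴴ), with equality when Φ_k = Z_k (Σ_l Z_l)⁻¹ for all k. -/

import Mathlib

open Matrix ComplexOrder

lemma aux_psd_sum {M : ℕ} {ι : Type*} (s : Finset ι) (f : ι → Matrix (Fin M) (Fin M) ℂ)
    (h : ∀ i ∈ s, (f i).PosSemidef) : (∑ i ∈ s, f i).PosSemidef := by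
  classical
  induction s using Finset.induction with
  | empty => simpa using Matrix.PosSemidef.zero
  | insert _ _ hx ih =>
    rw [Finset.sum_insert hx]
    exact (h _ (Finset.mem_insert_self _ _)).add (ih fun i hi => h i (Finset.mem_insert_of_mem hi))

lemma aux_trace_re_nonneg {M : ℕ} {P : Matrix (Fin M) (Fin M) ℂ} (hP : P.PosSemidef) :
    0 ≤ P.trace.re := by
  have h : ∀ i, 0 ≤ (P i i).re := by
    intro i
    have := hP.re_dotProduct_nonneg (Pi.single i 1)
    simpa [dotProduct, mulVec, Pi.single_apply] using this
  calc (0:ℝ) ≤ ∑ i, (P i i).re := Finset.sum_nonneg fun i _ => h i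
    _ = P.trace.re := by simp [Matrix.trace, Matrix.diag, Complex.re_sum]

theorem stmt_1 (M L : ℕ) (Z : Fin L → Matrix (Fin M) (Fin M) ℂ)
    (A : Matrix (Fin M) (Fin M) ℂ) (Φ : Fin L → Matrix (Fin M) (Fin M) ℂ)
    (hZ : ∀ l, (Z l).PosDef) (hA : A.PosSemidef)
    (hΦ : ∑ l, Φ l = 1) :
    (-(((∑ l, Z l)⁻¹ * A).trace.re) ≥
      -∑ l, ((Z l)⁻¹ * Φ l * A * (Φ l)ᴴ).trace.re) ∧
    ((∀ k, Φ k = Z k * (∑ l, Z l)⁻¹) →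
      -(((∑ l, Z l)⁻¹ * A).trace.re) =
        -∑ l, ((Z l)⁻¹ * Φ l * A * (Φ l)ᴴ).trace.re) := by
  rcases Nat.eq_zero_or_pos M with hM | hM
  · subst hM
    constructor
    · simp [Matrix.trace]
    · intro _; simp [Matrix.trace]
  rcases Nat.eq_zero_or_pos L with hL | hL
  · exfalso
    subst hL
    have h0 : (0 : Matrix (Fin M) (Fin M) ℂ) = 1 := by simpa using hΦ
    have := congrFun (congrFun h0 ⟨0, hM⟩) ⟨0, hM⟩
    simp [Matrix.one_apply] at this
  -- main case
  set S : Matrix (Fin M) (Fin M) ℂ := ∑ l, Z l with hSdef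
  have hS : S.PosDef := by
    have hrw : S = Z ⟨0, hL⟩ + ∑ l ∈ Finset.univ.erase ⟨0, hL⟩, Z l := by
      rw [hSdef, Finset.add_sum_erase _ _ (Finset.mem_univ _)]
    rw [hrw]
    exact (hZ _).add_posSemidef
      (aux_psd_sum _ _ fun i _ => (hZ i).posSemidef)
  have hSd : IsUnit S.det := (Matrix.isUnit_iff_isUnit_det S).1 hS.isUnit
  have hZd : ∀ l, IsUnit (Z l).det := fun l => (Matrix.isUnit_iff_isUnit_det _).1 (hZ l).isUnit
  have hSinvH : (S⁻¹)ᴴ = S⁻¹ := hS.inv.isHermitian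
  -- difference matrices
  set D : Fin L → Matrix (Fin M) (Fin M) ℂ := fun l => Φ l - Z l * S⁻¹ with hDdef
  have hDH : ∀ l, (D l)ᴴ = (Φ l)ᴴ - S⁻¹ * Z l := by
    intro l
    rw [hDdef]
    simp only [conjTranspose_sub, conjTranspose_mul, hSinvH, (hZ l).isHermitian.eq]
  -- per-l trace identity
  have tr_l : ∀ l, ((Z l)⁻¹ * D l * A * (D l)ᴴ).trace
      = ((Z l)⁻¹ * Φ l * A * (Φ l)ᴴ).trace - (Φ l * (A * S⁻¹)).trace
        - (S⁻¹ * A * (Φ l)ᴴ).trace + (S⁻¹ * A * (S⁻¹ * Z l)).trace := by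
    intro l
    have e1 : (Z l)⁻¹ * D l = (Z l)⁻¹ * Φ l - S⁻¹ := by
      rw [hDdef]
      simp only [mul_sub]
      rw [← Matrix.mul_assoc, Matrix.nonsing_inv_mul _ (hZd l), Matrix.one_mul]
    have h2 : ((Z l)⁻¹ * Φ l * A * (S⁻¹ * Z l)).trace = (Φ l * (A * S⁻¹)).trace := by
      have : (Z l)⁻¹ * Φ l * A * (S⁻¹ * Z l) = ((Z l)⁻¹ * (Φ l * (A * S⁻¹))) * Z l := by
        simp only [Matrix.mul_assoc]
      rw [this, Matrix.trace_mul_comm, Matrix.mul_nonsing_inv_cancel_left _ _ (hZd l)]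
    rw [hDH l, e1]
    simp only [Matrix.sub_mul, Matrix.mul_sub, Matrix.trace_sub]
    rw [h2]
    ring
  -- summed identity
  have sumEq : ∑ l, ((Z l)⁻¹ * D l * A * (D l)ᴴ).trace
      = (∑ l, ((Z l)⁻¹ * Φ l * A * (Φ l)ᴴ).trace) - (S⁻¹ * A).trace := by
    simp only [tr_l]
    rw [Finset.sum_add_distrib, Finset.sum_sub_distrib, Finset.sum_sub_distrib]
    have hb : ∑ l, (Φ l * (A * S⁻¹)).trace = (S⁻¹ * A).trace := by
      rw [← Matrix.trace_sum, ← Finset.sum_mul, hΦ, Matrix.one_mul, Matrix.trace_mul_comm]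
    have hc : ∑ l, (S⁻¹ * A * (Φ l)ᴴ).trace = (S⁻¹ * A).trace := by
      rw [← Matrix.trace_sum, ← Finset.mul_sum, ← Matrix.conjTranspose_sum, hΦ,
        Matrix.conjTranspose_one, Matrix.mul_one]
    have hd : ∑ l, (S⁻¹ * A * (S⁻¹ * Z l)).trace = (S⁻¹ * A).trace := by
      rw [← Matrix.trace_sum, ← Finset.mul_sum, ← Finset.mul_sum, ← hSdef,
        Matrix.nonsing_inv_mul _ hSd, Matrix.mul_one]
    rw [hb, hc, hd]
    ring
  -- nonnegativity of each term
  have nn : ∀ l, 0 ≤ ((Z l)⁻¹ * D l * A * (D l)ᴴ).trace.re := by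
    intro l
    obtain ⟨R, hRP, hRR⟩ : ∃ R : Matrix (Fin M) (Fin M) ℂ, R.PosSemidef ∧ R * R = A := by
      open scoped MatrixOrder in
      exact ⟨CFC.sqrt A, (CFC.sqrt_nonneg A).posSemidef, CFC.sqrt_mul_sqrt_self A hA.nonneg⟩
    have h1 : ((Z l)⁻¹ * D l * A * (D l)ᴴ).trace
        = (R * ((D l)ᴴ * (Z l)⁻¹ * D l) * R).trace := by
      rw [Matrix.trace_mul_comm]
      have : (D l)ᴴ * ((Z l)⁻¹ * D l * A) = ((D l)ᴴ * (Z l)⁻¹ * D l) * (R * R) := by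
        rw [hRR]; simp only [Matrix.mul_assoc]
      rw [this, ← Matrix.mul_assoc, Matrix.trace_mul_comm]
      simp only [Matrix.mul_assoc]
    have hP : (R * ((D l)ᴴ * (Z l)⁻¹ * D l) * R).PosSemidef := by
      have hmid : ((D l)ᴴ * (Z l)⁻¹ * D l).PosSemidef :=
        (hZ l).inv.posSemidef.conjTranspose_mul_mul_same (D l)
      have := hmid.conjTranspose_mul_mul_same R
      rwa [hRP.isHermitian.eq] at this
    rw [h1]
    exact aux_trace_re_nonneg hP
  -- take real parts
  have sumEqRe : ∑ l, ((Z l)⁻¹ * D l * A * (D l)ᴴ).trace.re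
      = (∑ l, ((Z l)⁻¹ * Φ l * A * (Φ l)ᴴ).trace.re) - (S⁻¹ * A).trace.re := by
    have := congrArg Complex.re sumEq
    simpa [Complex.re_sum] using this
  constructor
  · have h0 : 0 ≤ ∑ l, ((Z l)⁻¹ * D l * A * (D l)ᴴ).trace.re :=
      Finset.sum_nonneg fun l _ => nn l
    rw [sumEqRe] at h0
    linarith
  · intro hk
    have hD0 : ∀ l, D l = 0 := by
      intro l; rw [hDdef]; simp [hk l]
    have : ∑ l, ((Z l)⁻¹ * D l * A * (D l)ᴴ).trace.re = 0 := by
      simp [hD0]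
    rw [sumEqRe] at this
    linarith
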